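/- Let N be a finite nilpotent group and let w be a word in variables x₁,…,xₙ with parameters from N. If the gcd of the exponent sums of the variables in w together with the exponent of N is 1, then the induced map w : Nⁿ → N has fibers of uniform size |N|^(n-1). -/

import Mathlib

/-- The map `Nⁿ → N` induced by a word with parameters from `N`
(an element of the free product `N ∗ F⟨x₁,…,xₙ⟩`). -/
def paramWordMap {N : Type*} [Group N] {n : ℕ}
    (w : Monoid.Coprod N (FreeGroup (Fin n))) (v : Fin n → N) : N :=
  Monoid.Coprod.lift (MonoidHom.id N) (FreeGroup.lift v) w

/-- The exponent sum of the variable `xᵢ` in a word with parameters. -/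
def paramExpSum {N : Type*} [Group N] {n : ℕ}
    (w : Monoid.Coprod N (FreeGroup (Fin n))) (i : Fin n) : ℤ :=
  Multiplicative.toAdd <|
    Monoid.Coprod.lift 1
      (FreeGroup.lift fun j => if j = i then Multiplicative.ofAdd (1 : ℤ) else 1) w

open Monoid Function
open scoped IsMulCommutative

namespace Stmt4Aux

variable {N : Type*} [Group N] {n : ℕ}

/-- multiplication with a central element, as a hom -/
def mulCenterHom (N : Type*) [Group N] : N × Subgroup.center N →* N where
  toFun p := p.1 * p.2
  map_one' := by simp
  map_mul' p q := by
    have h : (p.2 : N) * q.1 = q.1 * p.2 :=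
      (Subgroup.mem_center_iff.mp p.2.2 q.1).symm
    simp only [Prod.fst_mul, Prod.snd_mul, Subgroup.coe_mul]
    calc p.1 * q.1 * ((p.2 : N) * q.2) = p.1 * (q.1 * (p.2 : N) * q.2) := by
          rw [mul_assoc, mul_assoc]
      _ = p.1 * ((p.2 : N) * q.1 * q.2) := by rw [← h]
      _ = p.1 * (p.2 : N) * (q.1 * q.2) := by
          rw [mul_assoc (p.2 : N) q.1, ← mul_assoc]

/-- exponent-vector homomorphism -/
def expHom (N : Type*) [Group N] (n : ℕ) :
    Monoid.Coprod N (FreeGroup (Fin n)) →* Multiplicative (Fin n → ℤ) :=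
  Monoid.Coprod.lift 1 (FreeGroup.lift fun j => Multiplicative.ofAdd (Pi.single j 1))

lemma paramExpSum_eq_expHom (w : Monoid.Coprod N (FreeGroup (Fin n))) (i : Fin n) :
    paramExpSum w i = Multiplicative.toAdd (expHom N n w) i := by
  have h : (AddMonoidHom.toMultiplicative (Pi.evalAddMonoidHom (fun _ : Fin n => ℤ) i)).comp
        (expHom N n)
      = Monoid.Coprod.lift 1
          (FreeGroup.lift fun j => if j = i then Multiplicative.ofAdd (1 : ℤ) else 1) := by
    apply Monoid.Coprod.hom_ext
    · ext x
      simp [expHom]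
    · rw [MonoidHom.comp_assoc]
      simp only [expHom, Monoid.Coprod.lift_comp_inr]
      apply FreeGroup.ext_hom
      intro a
      simp only [MonoidHom.comp_apply, FreeGroup.lift_apply_of]
      by_cases hai : a = i
      · subst hai; simp
      · simp [hai, Pi.single_apply, Ne.symm hai]
  have := DFunLike.congr_fun h w
  simp only [MonoidHom.comp_apply] at this
  rw [paramExpSum, ← this]
  rfl

end Stmt4Aux

namespace Stmt4Aux

variable {N : Type*} [Group N] {n : ℕ}

/-- product of central powers as hom from the exponent-vector group -/
def centralProdHom (z : Fin n → Subgroup.center N) :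
    Multiplicative (Fin n → ℤ) →* Subgroup.center N where
  toFun k := ∏ i, z i ^ (Multiplicative.toAdd k i)
  map_one' := by simp
  map_mul' a b := by
    simp only [toAdd_mul, Pi.add_apply, zpow_add, Finset.prod_mul_distrib]

lemma paramWordMap_mul_central (w : Monoid.Coprod N (FreeGroup (Fin n)))
    (v : Fin n → N) (z : Fin n → Subgroup.center N) :
    paramWordMap w (fun i => v i * z i) =
      paramWordMap w v * ((∏ i, z i ^ paramExpSum w i : Subgroup.center N) : N) := by
  have h1 : Monoid.Coprod.lift (MonoidHom.id N) (FreeGroup.lift (fun i => v i * (z i : N)))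
      = (mulCenterHom N).comp
          ((Monoid.Coprod.lift (MonoidHom.id N) (FreeGroup.lift v)).prod
            (Monoid.Coprod.lift 1 (FreeGroup.lift z))) := by
    apply Monoid.Coprod.hom_ext
    · ext x
      simp [mulCenterHom]
    · apply FreeGroup.ext_hom
      intro a
      simp [mulCenterHom]
  have h2 : (Monoid.Coprod.lift (1 : N →* Subgroup.center N) (FreeGroup.lift z))
      = (centralProdHom z).comp (expHom N n) := by
    apply Monoid.Coprod.hom_ext
    · ext x
      simp [centralProdHom, expHom]
    · apply FreeGroup.ext_hom
      intro a
      simp only [MonoidHom.comp_apply, MonoidHom.coe_comp, Function.comp_apply,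
        Monoid.Coprod.lift_apply_inr, FreeGroup.lift_apply_of, expHom, centralProdHom,
        MonoidHom.coe_mk, OneHom.coe_mk, toAdd_ofAdd]
      symm
      rw [Finset.prod_eq_single a]
      · simp
      · intro b _ hb
        simp [Pi.single_apply, hb]
      · simp
  have := DFunLike.congr_fun h1 w
  simp only [MonoidHom.comp_apply, MonoidHom.prod_apply] at this
  have h2' := DFunLike.congr_fun h2 w
  simp only [MonoidHom.comp_apply] at h2'
  show Monoid.Coprod.lift (MonoidHom.id N) (FreeGroup.lift (fun i => v i * (z i : N))) w = _
  rw [this, h2']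
  show (paramWordMap w v) * ((centralProdHom z) (expHom N n w) : N) = _
  congr 2
  show (∏ i, z i ^ (Multiplicative.toAdd (expHom N n w) i)) = _
  refine Finset.prod_congr rfl fun i _ => ?_
  rw [paramExpSum_eq_expHom]

end Stmt4Aux

namespace Stmt4Aux

variable {N : Type*} [Group N] {n : ℕ}

section Push

variable {Q : Type*} [Group Q] (π : N →* Q)

/-- push the parameters of a word through a hom -/
def pushWord (π : N →* Q) : Monoid.Coprod N (FreeGroup (Fin n)) →* Monoid.Coprod Q (FreeGroup (Fin n)) :=
  Monoid.Coprod.lift ((Monoid.Coprod.inl).comp π) Monoid.Coprod.inr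

lemma paramExpSum_pushWord (w : Monoid.Coprod N (FreeGroup (Fin n))) (i : Fin n) :
    paramExpSum (pushWord π w) i = paramExpSum w i := by
  have h : (Monoid.Coprod.lift 1
        (FreeGroup.lift fun j => if j = i then Multiplicative.ofAdd (1 : ℤ) else 1)).comp
        (pushWord (n := n) π)
      = Monoid.Coprod.lift 1
          (FreeGroup.lift fun j => if j = i then Multiplicative.ofAdd (1 : ℤ) else 1) := by
    apply Monoid.Coprod.hom_ext
    · ext x
      simp [pushWord]
    · apply FreeGroup.ext_hom
      intro a
      simp [pushWord]
  have := DFunLike.congr_fun h w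
  simp only [MonoidHom.comp_apply] at this
  rw [paramExpSum, paramExpSum, this]

lemma paramWordMap_pushWord (w : Monoid.Coprod N (FreeGroup (Fin n))) (v : Fin n → N) :
    paramWordMap (pushWord π w) (fun i => π (v i)) = π (paramWordMap w v) := by
  have h : (Monoid.Coprod.lift (MonoidHom.id Q) (FreeGroup.lift fun i => π (v i))).comp
        (pushWord (n := n) π)
      = π.comp (Monoid.Coprod.lift (MonoidHom.id N) (FreeGroup.lift v)) := by
    apply Monoid.Coprod.hom_ext
    · ext x
      simp [pushWord]
    · apply FreeGroup.ext_hom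
      intro a
      simp [pushWord]
  have := DFunLike.congr_fun h w
  simp only [MonoidHom.comp_apply] at this
  exact this

end Push

/-- the product-of-powers homomorphism on a commutative group -/
def prodPowHom (A : Type*) [CommGroup A] (n : ℕ) (e : Fin n → ℤ) : (Fin n → A) →* A where
  toFun z := ∏ i, z i ^ e i
  map_one' := by simp
  map_mul' a b := by simp [mul_zpow, Finset.prod_mul_distrib]

lemma prodPowHom_surjective (A : Type*) [CommGroup A] (n : ℕ) (e : Fin n → ℤ)
    (E : ℕ) (hE : ∀ a : A, a ^ E = 1)
    (h1 : Nat.gcd (Finset.univ.gcd fun i => (e i).natAbs) E = 1) :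
    Function.Surjective (prodPowHom A n e) := by
  intro g
  set H := MonoidHom.range (prodPowHom A n e) with hH
  suffices hg : g ∈ H by exact hg
  set K : AddSubgroup ℤ :=
    { carrier := {k | g ^ k ∈ H}
      zero_mem' := by simp [Set.mem_setOf_eq, one_mem]
      add_mem' := by
        intro a b ha hb
        simp only [Set.mem_setOf_eq, zpow_add] at *
        exact mul_mem ha hb
      neg_mem' := by
        intro a ha
        simp only [Set.mem_setOf_eq, zpow_neg] at *
        exact inv_mem ha } with hK
  have he : ∀ i, e i ∈ K := by
    intro i
    show g ^ e i ∈ H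
    refine ⟨fun j => if j = i then g else 1, ?_⟩
    show (∏ j, (if j = i then g else 1) ^ e j) = g ^ e i
    rw [Finset.prod_eq_single i]
    · simp
    · intro b _ hb
      simp [hb]
    · simp
  have hEK : (E : ℤ) ∈ K := by
    show g ^ (E : ℤ) ∈ H
    rw [zpow_natCast, hE g]
    exact one_mem H
  obtain ⟨a, ha⟩ := Int.subgroup_cyclic K
  have hdvd : ∀ x ∈ K, a ∣ x := by
    intro x hx
    rw [ha, AddSubgroup.mem_closure_singleton] at hx
    obtain ⟨m, hm⟩ := hx
    exact Dvd.intro_left m hm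
  have hana : a.natAbs ∣ 1 := by
    rw [← h1]
    refine Nat.dvd_gcd (Finset.dvd_gcd fun i _ => ?_) ?_
    · exact Int.natAbs_dvd_natAbs.mpr (hdvd _ (he i))
    · have := Int.natAbs_dvd_natAbs.mpr (hdvd _ hEK)
      simpa using this
  have h1K : (1 : ℤ) ∈ K := by
    rw [ha, AddSubgroup.mem_closure_singleton]
    have ha1 : a.natAbs = 1 := Nat.eq_one_of_dvd_one hana
    have h11 : a = 1 ∨ a = -1 := by omega
    rcases h11 with h | h
    · exact ⟨1, by simp [h]⟩
    · exact ⟨-1, by simp [h]⟩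
  have : g ^ (1 : ℤ) ∈ H := h1K
  simpa using this

end Stmt4Aux

namespace Stmt4Aux

lemma card_fiber_mul_card_eq {G H : Type*} [Group G] [Group H] [Finite G] [Finite H]
    (φ : G →* H) (hs : Function.Surjective φ) (h : H) :
    Nat.card {x // φ x = h} * Nat.card H = Nat.card G := by
  obtain ⟨x₀, hx₀⟩ := hs h
  have e : {x // φ x = h} ≃ φ.ker := by
    refine ⟨fun x => ⟨x₀⁻¹ * x.1, ?_⟩, fun y => ⟨x₀ * y.1, ?_⟩, ?_, ?_⟩
    · simp [MonoidHom.mem_ker, hx₀, x.2]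
    · have := y.2
      rw [MonoidHom.mem_ker] at this
      simp [this, hx₀]
    · intro x; ext; simp
    · intro y; ext; simp
  rw [Nat.card_congr e]
  have h2 := Subgroup.card_eq_card_quotient_mul_card_subgroup φ.ker
  have h3 : Nat.card (G ⧸ φ.ker) = Nat.card H :=
    Nat.card_congr (QuotientGroup.quotientKerEquivOfSurjective φ hs).toEquiv
  rw [h2, h3, mul_comm]

lemma card_eq_of_uniform_fibers {α β : Type*} [Finite α] [Finite β] (F : α → β) (m : ℕ)
    (h : ∀ b, Nat.card {a // F a = b} = m) : Nat.card α = Nat.card β * m := by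
  classical
  cases nonempty_fintype α
  cases nonempty_fintype β
  rw [Nat.card_eq_fintype_card, Nat.card_eq_fintype_card,
    ← Fintype.card_congr (Equiv.sigmaFiberEquiv F), Fintype.card_sigma]
  rw [Finset.sum_congr rfl fun b _ => ?_, Finset.sum_const, Finset.card_univ, smul_eq_mul]
  rw [← h b, Nat.card_eq_fintype_card]

end Stmt4Aux

namespace Stmt4Aux

lemma subsingleton_case {N : Type*} [Group N] [Subsingleton N] {n : ℕ}
    (w : Monoid.Coprod N (FreeGroup (Fin n))) (g : N) :
    Nat.card {v : Fin n → N // paramWordMap w v = g} = Nat.card N ^ (n - 1) := by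
  haveI : Unique N := ⟨⟨1⟩, fun a => Subsingleton.elim a 1⟩
  have hall : ∀ v : Fin n → N, paramWordMap w v = g := fun v => Subsingleton.elim _ _
  rw [Nat.card_congr (Equiv.subtypeUnivEquiv hall), Nat.card_unique, Nat.card_unique, one_pow]

universe u

def Pprop (n : ℕ) (G : Type u) [Group G] : Prop :=
  ∀ [Finite G], ∀ (w : Monoid.Coprod G (FreeGroup (Fin n)))
    (_ : Nat.gcd (Finset.univ.gcd fun i => (paramExpSum w i).natAbs)
      (Monoid.exponent G) = 1)
    (g : G), Nat.card {v : Fin n → G // paramWordMap w v = g} = Nat.card G ^ (n - 1)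

lemma step_lemma (n : ℕ) (G : Type u) [Group G] [Group.IsNilpotent G]
    (IH : Pprop n (G ⧸ Subgroup.center G)) : Pprop n G := by
    intro _ w hgcd g
    by_cases hsub : Subsingleton G
    · exact subsingleton_case w g
    -- setup
    set Z := Subgroup.center G with hZ
    set π : G →* G ⧸ Z := QuotientGroup.mk' Z with hπ
    have hπs : Function.Surjective π := QuotientGroup.mk'_surjective Z
    set w' := pushWord (n := n) π w with hw'
    -- gcd hypothesis descends
    have hsum : (fun i => (paramExpSum w' i).natAbs) = fun i => (paramExpSum w i).natAbs := by
      funext i; rw [hw', paramExpSum_pushWord]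
    have hgcd' : Nat.gcd (Finset.univ.gcd fun i => (paramExpSum w' i).natAbs)
        (Monoid.exponent (G ⧸ Z)) = 1 := by
      rw [hsum]
      refine Nat.dvd_one.mp ?_
      rw [← hgcd]
      exact Nat.dvd_gcd (Nat.gcd_dvd_left _ _)
        ((Nat.gcd_dvd_right _ _).trans (MonoidHom.exponent_dvd hπs))
    -- n ≥ 1
    have hn : 1 ≤ n := by
      by_contra hn0
      have h0 : n = 0 := by omega
      subst h0
      have : Finset.univ.gcd (fun i : Fin 0 => (paramExpSum w i).natAbs) = 0 := by
        simp
      rw [this, Nat.gcd_zero_left] at hgcd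
      refine hsub ⟨fun a b => ?_⟩
      have ha := Monoid.pow_exponent_eq_one a
      have hb := Monoid.pow_exponent_eq_one b
      rw [hgcd, pow_one] at ha hb
      rw [ha, hb]
    -- fibers of the product-of-powers map on the center
    set e := fun i => paramExpSum w i with he
    have hEonZ : ∀ a : Z, a ^ Monoid.exponent G = 1 := by
      intro a
      apply Subtype.ext
      push_cast
      exact Monoid.pow_exponent_eq_one (a : G)
    have hsurj : Function.Surjective (prodPowHom Z n e) :=
      prodPowHom_surjective Z n e (Monoid.exponent G) hEonZ hgcd
    have hZcard : ∀ t : Z, Nat.card {z : Fin n → Z // prodPowHom Z n e z = t}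
        = Nat.card Z ^ (n - 1) := by
      intro t
      have h1 := card_fiber_mul_card_eq (prodPowHom Z n e) hsurj t
      have h2 : Nat.card (Fin n → Z) = Nat.card Z ^ n := by
        simp [Nat.card_fun]
      rw [h2] at h1
      have hpos : 0 < Nat.card Z := Nat.card_pos
      have h3 : Nat.card Z ^ n = Nat.card Z ^ (n - 1) * Nat.card Z := by
        rw [← pow_succ]
        congr 1
        omega
      rw [h3] at h1
      exact Nat.eq_of_mul_eq_mul_right hpos h1
    -- the projection map between fibers
    have hFmap : ∀ v : {v : Fin n → G // paramWordMap w v = g},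
        paramWordMap w' (fun i => π (v.1 i)) = π g := by
      intro v
      rw [hw', paramWordMap_pushWord, v.2]
    set F : {v : Fin n → G // paramWordMap w v = g} →
        {v' : Fin n → G ⧸ Z // paramWordMap w' v' = π g} :=
      fun v => ⟨fun i => π (v.1 i), hFmap v⟩ with hF
    have huniform : ∀ b, Nat.card {a // F a = b} = Nat.card Z ^ (n - 1) := by
      rintro ⟨vb, hvb⟩
      choose u hu using fun i => hπs (vb i)
      have hwu : π (paramWordMap w u) = π g := by
        calc π (paramWordMap w u) = paramWordMap w' (fun i => π (u i)) :=
              (paramWordMap_pushWord π w u).symm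
          _ = paramWordMap w' vb := by
              congr 1
              funext i
              exact hu i
          _ = π g := hvb
      have hkerZ : ∀ x : G, π x = 1 → x ∈ Z := by
        intro x hx
        have h2 : x ∈ MonoidHom.ker π := MonoidHom.mem_ker.mpr hx
        rwa [hπ, QuotientGroup.ker_mk'] at h2
      have hc0 : (paramWordMap w u)⁻¹ * g ∈ Z := by
        apply hkerZ
        rw [map_mul, map_inv, hwu, inv_mul_cancel]
      have hmem : ∀ (a : {a // F a = ⟨vb, hvb⟩}) (i : Fin n), (u i)⁻¹ * a.1.1 i ∈ Z := by
        intro a i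
        apply hkerZ
        have hai : π (a.1.1 i) = vb i := by
          have h4 := congrArg Subtype.val a.2
          exact congrFun h4 i
        rw [map_mul, map_inv, hu, hai, inv_mul_cancel]
      have hequiv : {a // F a = ⟨vb, hvb⟩} ≃
          {z : Fin n → Z // prodPowHom Z n e z = ⟨(paramWordMap w u)⁻¹ * g, hc0⟩} := by
        refine ⟨fun a => ⟨fun i => ⟨(u i)⁻¹ * a.1.1 i, hmem a i⟩, ?_⟩,
          fun z => ⟨⟨fun i => u i * z.1 i, ?_⟩, ?_⟩, fun a => ?_, fun z => ?_⟩
        · apply Subtype.ext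
          have h5 := paramWordMap_mul_central w u (fun i => ⟨(u i)⁻¹ * a.1.1 i, hmem a i⟩)
          simp only [mul_inv_cancel_left] at h5
          have h6 : paramWordMap w a.1.1 = g := a.1.2
          show ((∏ i, (⟨(u i)⁻¹ * a.1.1 i, hmem a i⟩ : Z) ^ e i : Z) : G)
            = (paramWordMap w u)⁻¹ * g
          simp only [he]
          rw [eq_inv_mul_iff_mul_eq, ← h5]
          exact a.1.2
        · have h5 := paramWordMap_mul_central w u z.1
          rw [h5]
          have h6 : ((∏ i, z.1 i ^ e i : Z) : G) = (paramWordMap w u)⁻¹ * g := by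
            rw [show (∏ i, z.1 i ^ e i : Z) = prodPowHom Z n e z.1 from rfl, z.2]
          rw [show (∏ i, z.1 i ^ paramExpSum w i : Z) = (∏ i, z.1 i ^ e i : Z) from rfl, h6]
          group
        · apply Subtype.ext
          funext i
          show π (u i * (z.1 i : G)) = vb i
          rw [map_mul, hu]
          have h7 : π (z.1 i : G) = 1 := by
            have := (z.1 i).2
            rw [hπ]
            rwa [QuotientGroup.mk'_apply, QuotientGroup.eq_one_iff]
          rw [h7, mul_one]
        · apply Subtype.ext
          apply Subtype.ext
          funext i
          show u i * ((u i)⁻¹ * a.1.1 i) = a.1.1 i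
          group
        · apply Subtype.ext
          funext i
          apply Subtype.ext
          show (u i)⁻¹ * (u i * (z.1 i : G)) = z.1 i
          group
      rw [Nat.card_congr hequiv]
      exact hZcard _
    have hcount := card_eq_of_uniform_fibers F (Nat.card Z ^ (n - 1)) huniform
    rw [hcount, IH w' hgcd' (π g), ← mul_pow,
      ← Subgroup.card_eq_card_quotient_mul_card_subgroup Z]

end Stmt4Aux

namespace Stmt4Aux

lemma main_nilpotent (n : ℕ) (G : Type u) [Group G] [Group.IsNilpotent G] : Pprop n G :=
  nilpotent_center_quotient_ind (P := fun H _ _ => Pprop n H) G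
    (fun H _ _ => fun w _ g => subsingleton_case w g)
    (fun H _ _ IH => step_lemma n H IH)

end Stmt4Aux

/-- If `N` is a finite nilpotent group and the gcd of the
exponent sums of the variables of `w` together with the exponent of `N`
is `1`, then the word-with-parameters map `w : Nⁿ → N` has all fibers of
size `|N|^(n-1)`. -/
theorem stmt_4 (N : Type*) [Group N] [Finite N] [Group.IsNilpotent N]
    (n : ℕ) (w : Monoid.Coprod N (FreeGroup (Fin n)))
    (hgcd : Nat.gcd (Finset.univ.gcd fun i => (paramExpSum w i).natAbs)
      (Monoid.exponent N) = 1) :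
    ∀ g : N, Nat.card {v : Fin n → N // paramWordMap w v = g} =
      Nat.card N ^ (n - 1) :=
  fun g => Stmt4Aux.main_nilpotent n N w hgcd g
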